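/- Let G be a finite connected simple graph and s a vertex. Under threshold-1 Greenberg–Hastings dynamics started from the configuration in which s is excited and every other vertex is resting, every vertex v is in the excited state at exactly one time step, namely t = dist(s,v). -/
import Mathlib

/-- The three states of a Greenberg–Hastings excitable automaton node. -/
inductive GHState where
  | resting : GHState
  | excited : GHState
  | refractory : GHState
deriving DecidableEq

open GHState

/-- Number of excited neighbours of `v` in configuration `c`. -/
def excitedCount {V : Type*} (G : SimpleGraph V) [Fintype V] [DecidableRel G.Adj]
    (c : V → GHState) (v : V) : ℕ :=
  ((G.neighborFinset v).filter (fun u => c u = excited)).card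

/-- Greenberg–Hastings update map `F_S`: a resting vertex becomes excited iff its
number of excited neighbours lies in `S`; an excited vertex becomes refractory;
a refractory vertex becomes resting. -/
def ghStep {V : Type*} (G : SimpleGraph V) [Fintype V] [DecidableRel G.Adj]
    (S : Set ℕ) [DecidablePred (· ∈ S)] (c : V → GHState) : V → GHState :=
  fun v =>
    match c v with
    | resting => if excitedCount G c v ∈ S then excited else resting
    | excited => refractory
    | refractory => resting

/-- The wave configuration at time `t`. -/
noncomputable def ghWave {V : Type*} (G : SimpleGraph V) (s : V) (t : ℕ) : V → GHState :=
  fun v =>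
    if G.dist s v = t then excited
    else if G.dist s v + 1 = t then refractory
    else resting

lemma dist_le_adj {V : Type*} {G : SimpleGraph V} (hconn : G.Connected)
    {s u v : V} (h : G.Adj u v) : G.dist s v ≤ G.dist s u + 1 := by
  have := hconn.dist_triangle (u := s) (v := u) (w := v)
  rwa [(SimpleGraph.dist_eq_one_iff_adj).mpr h] at this

lemma dist_getVert_le {V : Type*} {G : SimpleGraph V} (hconn : G.Connected)
    {s v : V} (p : G.Walk s v) : ∀ i : ℕ, G.dist s (p.getVert i) ≤ i := by
  induction p with
  | nil => intro i; simp [SimpleGraph.Walk.getVert, SimpleGraph.dist_self]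
  | @cons a b c h q ih =>
    intro i
    cases i with
    | zero => simp [SimpleGraph.dist_self]
    | succ j =>
      have h1 : G.dist a (q.getVert j) ≤ G.dist a b + G.dist b (q.getVert j) :=
        hconn.dist_triangle
      have h2 : G.dist a b = 1 := (SimpleGraph.dist_eq_one_iff_adj).mpr h
      have := ih j
      calc G.dist a ((SimpleGraph.Walk.cons h q).getVert (j + 1))
          = G.dist a (q.getVert j) := by rw [SimpleGraph.Walk.getVert_cons_succ]
        _ ≤ G.dist a b + G.dist b (q.getVert j) := h1
        _ ≤ 1 + j := by omega
        _ = j + 1 := by omega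

lemma exists_adj_dist {V : Type*} {G : SimpleGraph V} (hconn : G.Connected)
    {s v : V} {t : ℕ} (hd : G.dist s v = t + 1) :
    ∃ u, G.Adj u v ∧ G.dist s u = t := by
  obtain ⟨p, hp⟩ := (hconn s v).exists_walk_length_eq_dist
  rw [hd] at hp
  refine ⟨p.getVert t, ?_, ?_⟩
  · have := p.adj_getVert_succ (i := t) (by omega)
    rwa [show t + 1 = p.length by omega, p.getVert_length] at this
  · have h1 := dist_getVert_le hconn p t
    have h2 : G.dist s v ≤ G.dist s (p.getVert t) + 1 := by
      refine dist_le_adj hconn ?_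
      have := p.adj_getVert_succ (i := t) (by omega)
      rwa [show t + 1 = p.length by omega, p.getVert_length] at this
    omega

lemma ghWave_step {V : Type*} (G : SimpleGraph V)
    [Fintype V] [DecidableEq V] [DecidableRel G.Adj]
    (hconn : G.Connected) (s : V) (t : ℕ) :
    ghStep G {n : ℕ | 1 ≤ n} (ghWave G s t) = ghWave G s (t + 1) := by
  funext v
  have hkey : excitedCount G (ghWave G s t) v ∈ {n : ℕ | 1 ≤ n} ↔
      ∃ u, G.Adj v u ∧ G.dist s u = t := by
    rw [Set.mem_setOf_eq, excitedCount]
    constructor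
    · intro h
      obtain ⟨u, hu⟩ := Finset.card_pos.mp h
      rw [Finset.mem_filter, SimpleGraph.mem_neighborFinset] at hu
      refine ⟨u, hu.1, ?_⟩
      by_contra hne
      have hw := hu.2
      simp only [ghWave, hne, if_false] at hw
      split at hw <;> simp_all
    · rintro ⟨u, hadj, hu⟩
      refine Finset.card_pos.mpr ⟨u, ?_⟩
      rw [Finset.mem_filter, SimpleGraph.mem_neighborFinset]
      exact ⟨hadj, by simp [ghWave, hu]⟩
  by_cases h1 : G.dist s v = t
  · simp [ghStep, ghWave, h1]
  · by_cases h2 : G.dist s v + 1 = t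
    · have h3 : ¬ (G.dist s v = t + 1) := by omega
      have h4 : ¬ (G.dist s v + 1 = t + 1) := by omega
      simp [ghStep, ghWave, h1, h2, h3, h4]
    · -- resting case
      by_cases h3 : G.dist s v = t + 1
      · obtain ⟨u, hadj, hu⟩ := exists_adj_dist hconn h3
        have : excitedCount G (ghWave G s t) v ∈ {n : ℕ | 1 ≤ n} :=
          hkey.mpr ⟨u, hadj.symm, hu⟩
        have hne : ¬ (t + 1 + 1 = t) := by omega
        simp [ghStep, ghWave, h1, h2, h3, hne, this]
      · have : ¬ excitedCount G (ghWave G s t) v ∈ {n : ℕ | 1 ≤ n} := by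
          rw [hkey]
          rintro ⟨u, hadj, hu⟩
          have ha : G.dist s v ≤ G.dist s u + 1 := dist_le_adj hconn hadj.symm
          have hb : G.dist s u ≤ G.dist s v + 1 := dist_le_adj hconn hadj
          omega
        have h4 : ¬ (G.dist s v + 1 = t + 1) := by omega
        simp [ghStep, ghWave, h1, h2, h3, h4, this]

/-- Under threshold-1 Greenberg–Hastings dynamics started from a single excited
vertex `s` (all other vertices resting), every vertex `v` is excited at exactly
one time step, namely `t = dist(s,v)`. -/
theorem excited_exactly_once {V : Type*} (G : SimpleGraph V)
    [Fintype V] [DecidableEq V] [DecidableRel G.Adj]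
    (hconn : G.Connected) (s : V) :
    ∀ v : V, ∀ t : ℕ,
      (ghStep G {n : ℕ | 1 ≤ n})^[t] (fun u => if u = s then excited else resting) v
        = excited ↔ t = G.dist s v := by
  have hinit : (fun u => if u = s then excited else resting) = ghWave G s 0 := by
    funext u
    by_cases h : u = s
    · simp [ghWave, h, SimpleGraph.dist_self]
    · have : G.dist s u ≠ 0 := fun hz => h ((hconn.dist_eq_zero_iff).mp hz).symm
      simp [ghWave, h, this]
  have hiter : ∀ t : ℕ,
      (ghStep G {n : ℕ | 1 ≤ n})^[t] (fun u => if u = s then excited else resting)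
        = ghWave G s t := by
    intro t
    induction t with
    | zero => simpa using hinit
    | succ n ih =>
      rw [Function.iterate_succ_apply', ih, ghWave_step G hconn s n]
  intro v t
  rw [hiter t]
  unfold ghWave
  split
  · next h => simp [h]
  · next h =>
    split <;> simp <;> omega
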